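/- Let A be a Volterra-Lyapunov stable real n×n matrix, i.e., there exists a positive diagonal matrix D with AD + DAᵀ positive definite. Then for every positive diagonal matrix D', every eigenvalue of AD' has positive real part. -/

import Mathlib

open Matrix

lemma aux_quad {n : ℕ} (M : Matrix (Fin n) (Fin n) ℝ) (hS : (M + Mᵀ).PosDef)
    (x : Fin n → ℂ) (hx : x ≠ 0) :
    0 < (star x ⬝ᵥ (M.map (fun r : ℝ => (r : ℂ))).mulVec x).re := by
  set a : Fin n → ℝ := fun i => (x i).re with ha
  set b : Fin n → ℝ := fun i => (x i).im with hb
  have key : (star x ⬝ᵥ (M.map (fun r : ℝ => (r : ℂ))).mulVec x).re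
      = a ⬝ᵥ M.mulVec a + b ⬝ᵥ M.mulVec b := by
    simp only [dotProduct, mulVec, Pi.star_apply, map_apply, Finset.mul_sum]
    rw [Complex.re_sum]
    rw [← Finset.sum_add_distrib]
    refine Finset.sum_congr rfl fun i _ => ?_
    rw [Complex.re_sum, ← Finset.sum_add_distrib]
    refine Finset.sum_congr rfl fun j _ => ?_
    simp [Complex.mul_re, Complex.mul_im, ha, hb]
    try ring
  rw [key]
  -- quadratic form identities: y ⬝ᵥ M y = (y ⬝ᵥ (M+Mᵀ) y)/2
  have half : ∀ y : Fin n → ℝ, y ⬝ᵥ M.mulVec y = (y ⬝ᵥ (M + Mᵀ).mulVec y) / 2 := by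
    intro y
    have ht : y ⬝ᵥ Mᵀ.mulVec y = y ⬝ᵥ M.mulVec y := by
      rw [dotProduct_mulVec, vecMul_transpose, dotProduct_comm]
    rw [add_mulVec, dotProduct_add, ht]
    ring
  have hsemi := hS.posSemidef
  have hnn : ∀ y : Fin n → ℝ, 0 ≤ y ⬝ᵥ M.mulVec y := by
    intro y
    rw [half]
    have := hsemi.dotProduct_mulVec_nonneg y
    simp only [star_trivial] at this
    linarith
  have hpos : ∀ y : Fin n → ℝ, y ≠ 0 → 0 < y ⬝ᵥ M.mulVec y := by
    intro y hy
    rw [half]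
    have := hS.dotProduct_mulVec_pos hy
    simp only [star_trivial] at this
    linarith
  have hab : a ≠ 0 ∨ b ≠ 0 := by
    by_contra h
    push_neg at h
    apply hx
    funext i
    have h1 : a i = 0 := by rw [h.1]; rfl
    have h2 : b i = 0 := by rw [h.2]; rfl
    exact Complex.ext h1 h2
  rcases hab with h | h
  · have := hpos a h
    have := hnn b
    linarith
  · have := hpos b h
    have := hnn a
    linarith

theorem stmt0 {n : ℕ} (A : Matrix (Fin n) (Fin n) ℝ)
    (hVL : ∃ d : Fin n → ℝ, (∀ i, 0 < d i) ∧
      (A * diagonal d + diagonal d * Aᵀ).PosDef)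
    (d' : Fin n → ℝ) (hd' : ∀ i, 0 < d' i)
    (μ : ℂ) (v : Fin n → ℂ) (hv : v ≠ 0)
    (heig : ((A * diagonal d').map (fun x : ℝ => (x : ℂ))).mulVec v = μ • v) :
    0 < μ.re := by
  obtain ⟨d, hd, hS⟩ := hVL
  have hS' : (A * diagonal d + (A * diagonal d)ᵀ).PosDef := by
    rwa [transpose_mul, diagonal_transpose]
  set x : Fin n → ℂ := fun i => ((d' i / d i : ℝ) : ℂ) * v i with hxdef
  have hx : x ≠ 0 := by
    intro h
    apply hv
    funext i
    have hi : x i = 0 := by rw [h]; rfl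
    have hc : ((d' i / d i : ℝ) : ℂ) ≠ 0 := by
      simp only [ne_eq, Complex.ofReal_eq_zero]
      exact ne_of_gt (div_pos (hd' i) (hd i))
    exact (mul_eq_zero.mp hi).resolve_left hc
  -- key: (A * diagonal d).map ℂ *ᵥ x = (A * diagonal d').map ℂ *ᵥ v
  have hkey : ((A * diagonal d).map (fun r : ℝ => (r : ℂ))).mulVec x
      = ((A * diagonal d').map (fun r : ℝ => (r : ℂ))).mulVec v := by
    funext i
    simp only [mulVec, dotProduct, map_apply, mul_diagonal, hxdef]
    refine Finset.sum_congr rfl fun j _ => ?_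
    have hdj : (d j : ℂ) ≠ 0 := by
      simp only [ne_eq, Complex.ofReal_eq_zero]
      exact ne_of_gt (hd j)
    push_cast
    field_simp
  have hpos := aux_quad (A * diagonal d) hS' x hx
  rw [hkey, heig] at hpos
  -- star x ⬝ᵥ μ • v = μ * (star x ⬝ᵥ v), and star x ⬝ᵥ v is real positive
  have hdot : star x ⬝ᵥ (μ • v) = μ * (star x ⬝ᵥ v) := by
    simp [dotProduct, Finset.mul_sum, smul_eq_mul]
    refine Finset.sum_congr rfl fun i _ => ?_
    ring
  have hc : star x ⬝ᵥ v = ((∑ i, (d' i / d i) * Complex.normSq (v i) : ℝ) : ℂ) := by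
    simp only [dotProduct, Pi.star_apply, hxdef]
    push_cast
    refine Finset.sum_congr rfl fun i _ => ?_
    simp [Complex.normSq_eq_conj_mul_self]
    ring
  have hcpos : 0 < ∑ i, (d' i / d i) * Complex.normSq (v i) := by
    obtain ⟨i, hi⟩ : ∃ i, v i ≠ 0 := by
      by_contra h
      push_neg at h
      exact hv (funext h)
    refine Finset.sum_pos' (fun j _ => ?_) ⟨i, Finset.mem_univ i, ?_⟩
    · exact mul_nonneg (le_of_lt (div_pos (hd' j) (hd j))) (Complex.normSq_nonneg _)
    · exact mul_pos (div_pos (hd' i) (hd i)) (Complex.normSq_pos.mpr hi)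
  rw [hdot, hc] at hpos
  simp only [Complex.mul_re, Complex.ofReal_re, Complex.ofReal_im, mul_zero, sub_zero] at hpos
  by_contra h
  push_neg at h
  nlinarith
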